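/- arXiv:1110.5067 — 4 statements merged into one kernel-verified Lean document; each statement's English description precedes it below -/
import Mathlib

section
/- Suppose u_i = x^{a_i} y^{b_i}, i = 1,...,m, are monomials with a_1 > a_2 > ... > a_m and b_1 < b_2 < ... < b_m, all nonnegative integers. If positive integers p, q (q ≥ 0, p ≥ 1) and nonnegative integers d_1,...,d_{i-1} satisfy p·a_i + q·a_{i+1} = Σ_{k<i} d_k a_k and p·b_i + q·b_{i+1} = Σ_{k<i} d_k b_k with not all d_k zero, then b_i/a_i ≤ b_{i-1}/a_{i-1}, a contradiction when b_i/a_i > b_{i-1}/a_{i-1}. Hence no such d_k exist. -/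
/-- Let `u_k = x^(a_k) y^(b_k)` be monomials with strictly decreasing `a` and strictly
increasing `b` exponents (on the relevant range of indices).  If `p ≥ 1`, `q ≥ 0` and
nonnegative integers `d_1, …, d_(i-1)`, not all zero, satisfy
`p·a_i + q·a_(i+1) = Σ_(k<i) d_k a_k` and `p·b_i + q·b_(i+1) = Σ_(k<i) d_k b_k`,
then we reach a contradiction (since `b_i/a_i > b_(i-1)/a_(i-1)`): no such `d_k` exist. -/
theorem stmt_8 (m i p q : ℕ) (a b d : ℕ → ℕ)
    (hi1 : 1 < i) (him : i ≤ m)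
    (ha : ∀ k, 1 ≤ k → k ≤ i → a (k + 1) < a k)
    (hb : ∀ k, 1 ≤ k → k ≤ i → b k < b (k + 1))
    (hai : 0 < a i)
    (hp : 1 ≤ p)
    (heqa : p * a i + q * a (i + 1) = ∑ k ∈ Finset.Ico 1 i, d k * a k)
    (heqb : p * b i + q * b (i + 1) = ∑ k ∈ Finset.Ico 1 i, d k * b k)
    (hd : ∃ k ∈ Finset.Ico 1 i, d k ≠ 0) :
    False := by
  -- `a` is strictly decreasing and `b` strictly increasing on the range
  have halt : ∀ l k, 1 ≤ k → k < l → l ≤ i + 1 → a l < a k := by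
    intro l
    induction l with
    | zero => intro k hk hkl hl; omega
    | succ n ih =>
      intro k hk hkl hl
      rcases Nat.lt_or_ge k n with h | h
      · exact lt_trans (ha n (by omega) (by omega)) (ih k hk h (by omega))
      · have hkn : k = n := by omega
        subst hkn
        exact ha k (by omega) (by omega)
  have hblt : ∀ l k, 1 ≤ k → k < l → l ≤ i + 1 → b k < b l := by
    intro l
    induction l with
    | zero => intro k hk hkl hl; omega
    | succ n ih =>
      intro k hk hkl hl
      rcases Nat.lt_or_ge k n with h | h
      · exact lt_trans (ih k hk h (by omega)) (hb n (by omega) (by omega))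
      · have hkn : k = n := by omega
        subst hkn
        exact hb k (by omega) (by omega)
  -- key strict inequality on the sums
  have key : (∑ k ∈ Finset.Ico 1 i, d k * b k) * a i
      < (∑ k ∈ Finset.Ico 1 i, d k * a k) * b i := by
    rw [Finset.sum_mul, Finset.sum_mul]
    obtain ⟨k0, hk0, hdk0⟩ := hd
    apply Finset.sum_lt_sum
    · intro k hk
      simp only [Finset.mem_Ico] at hk
      have h1 : b k < b i := hblt i k hk.1 hk.2 (by omega)
      have h2 : a i < a k := halt i k hk.1 hk.2 (by omega)
      have : b k * a i ≤ a k * b i := by nlinarith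
      calc d k * b k * a i = d k * (b k * a i) := by ring
        _ ≤ d k * (a k * b i) := Nat.mul_le_mul_left _ this
        _ = d k * a k * b i := by ring
    · refine ⟨k0, hk0, ?_⟩
      simp only [Finset.mem_Ico] at hk0
      have h1 : b k0 < b i := hblt i k0 hk0.1 hk0.2 (by omega)
      have h2 : a i < a k0 := halt i k0 hk0.1 hk0.2 (by omega)
      have hd1 : 1 ≤ d k0 := Nat.one_le_iff_ne_zero.mpr hdk0
      have : b k0 * a i < a k0 * b i := by nlinarith
      calc d k0 * b k0 * a i = d k0 * (b k0 * a i) := by ring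
        _ < d k0 * (a k0 * b i) := mul_lt_mul_of_pos_left this (show 0 < d k0 by omega)
        _ = d k0 * a k0 * b i := by ring
  rw [← heqa, ← heqb] at key
  have h3 : a (i + 1) < a i := ha i (by omega) le_rfl
  have h4 : b i < b (i + 1) := hb i (by omega) le_rfl
  have h5 : a (i + 1) * b i ≤ b (i + 1) * a i := by nlinarith
  have h6 : q * (a (i + 1) * b i) ≤ q * (b (i + 1) * a i) :=
    Nat.mul_le_mul_left _ h5
  nlinarith [key, h6]
end

section
/- With G acting on F[x,y,z] as above (0 < b,c,d < n, n | b+c+d), every minimal monomial generator of the invariant ring F[x,y,z]^G other than xyz involves at most two of the three variables. -/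
open MvPolynomial

/-- With the generator `σ` of the cyclic group of order `n` acting on `F[x,y,z]` by
`σ·x = ε^b x`, `σ·y = ε^c y`, `σ·z = ε^d z` (`0 < b,c,d < n`, `n ∣ b+c+d`), every
minimal monomial generator of the invariant ring other than `xyz` — i.e. every
invariant monomial `x^p y^q z^r ≠ xyz`, nonconstant, that is not a product of two
nonconstant invariant monomials — involves at most two of the three variables. -/
theorem stmt_12 (F : Type*) [Field F] (n b c d : ℕ)
    (ε : F) (hε : IsPrimitiveRoot ε n)
    (hb : 0 < b) (hbn : b < n) (hc : 0 < c) (hcn : c < n)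
    (hd : 0 < d) (hdn : d < n) (hbcd : n ∣ b + c + d)
    (σ : MvPolynomial (Fin 3) F →ₐ[F] MvPolynomial (Fin 3) F)
    (hσ : σ = aeval ![C (ε ^ b) * X 0, C (ε ^ c) * X 1, C (ε ^ d) * X 2])
    (Inv : ℕ → ℕ → ℕ → Prop)
    (hInv : ∀ p q r, Inv p q r ↔
      σ (X 0 ^ p * X 1 ^ q * X 2 ^ r) = X 0 ^ p * X 1 ^ q * X 2 ^ r)
    (p q r : ℕ) (hpqr : Inv p q r)
    (hnonconst : ¬(p = 0 ∧ q = 0 ∧ r = 0))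
    (hne : ¬(p = 1 ∧ q = 1 ∧ r = 1))
    (hmin : ¬ ∃ p₁ q₁ r₁ p₂ q₂ r₂ : ℕ,
      p₁ + p₂ = p ∧ q₁ + q₂ = q ∧ r₁ + r₂ = r ∧
      Inv p₁ q₁ r₁ ∧ Inv p₂ q₂ r₂ ∧
      ¬(p₁ = 0 ∧ q₁ = 0 ∧ r₁ = 0) ∧ ¬(p₂ = 0 ∧ q₂ = 0 ∧ r₂ = 0)) :
    p = 0 ∨ q = 0 ∨ r = 0 := by

  have key : ∀ p q r : ℕ, Inv p q r ↔ n ∣ b * p + c * q + d * r := by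
    intro p q r
    rw [hInv, hσ]
    have hσm : (aeval ![C (ε ^ b) * X 0, C (ε ^ c) * X 1, C (ε ^ d) * X 2] :
        MvPolynomial (Fin 3) F →ₐ[F] MvPolynomial (Fin 3) F)
        (X 0 ^ p * X 1 ^ q * X 2 ^ r)
        = C (ε ^ (b * p + c * q + d * r)) * (X 0 ^ p * X 1 ^ q * X 2 ^ r) := by
      have e : ∀ (a : F) (i : Fin 3) (k : ℕ),
          (C a * X i : MvPolynomial (Fin 3) F) ^ k = C (a ^ k) * X i ^ k := by
        intro a i k; rw [mul_pow, C_pow]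
      simp only [map_mul, map_pow, aeval_X, Matrix.cons_val_zero, Matrix.cons_val_one,
        Matrix.head_cons, Matrix.cons_val_two, Matrix.tail_cons, e, ← pow_mul, pow_add, C_mul]
      ring
    rw [hσm]
    constructor
    · intro h
      have hM : (X 0 ^ p * X 1 ^ q * X 2 ^ r : MvPolynomial (Fin 3) F) ≠ 0 :=
        mul_ne_zero (mul_ne_zero (pow_ne_zero _ (X_ne_zero _)) (pow_ne_zero _ (X_ne_zero _)))
          (pow_ne_zero _ (X_ne_zero _))
      have h0 : (C (ε ^ (b * p + c * q + d * r)) - 1)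
          * (X 0 ^ p * X 1 ^ q * X 2 ^ r : MvPolynomial (Fin 3) F) = 0 := by
        rw [sub_mul, one_mul, h, sub_self]
      have hC := (mul_eq_zero.mp h0).resolve_right hM
      have hε1 : ε ^ (b * p + c * q + d * r) = 1 := by
        have : (C (ε ^ (b * p + c * q + d * r)) : MvPolynomial (Fin 3) F) = C 1 := by
          rw [C_1]; exact sub_eq_zero.mp hC
        exact C_injective _ _ this
      exact (hε.pow_eq_one_iff_dvd _).mp hε1
    · intro h
      rw [(hε.pow_eq_one_iff_dvd _).mpr h, C_1, one_mul]
  by_contra h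
  push_neg at h
  obtain ⟨hp, hq, hr⟩ := h
  obtain ⟨p', rfl⟩ := Nat.exists_eq_succ_of_ne_zero hp
  obtain ⟨q', rfl⟩ := Nat.exists_eq_succ_of_ne_zero hq
  obtain ⟨r', rfl⟩ := Nat.exists_eq_succ_of_ne_zero hr
  apply hmin
  refine ⟨p', q', r', 1, 1, 1, by omega, by omega, by omega, ?_, ?_, ?_, by simp⟩
  · rw [key]
    have h1 := (key _ _ _).mp hpqr
    have heq : b * (p' + 1) + c * (q' + 1) + d * (r' + 1)
        = b * p' + c * q' + d * r' + (b + c + d) := by ring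
    rw [heq] at h1
    exact (Nat.dvd_add_iff_left hbcd).mpr h1
  · rw [key]
    simpa using hbcd
  · rintro ⟨h1, h2, h3⟩
    exact hne ⟨by omega, by omega, by omega⟩
end

section
/- For m ≥ 3, the sum over all (i+2)-element subsets Y of the vertices of the m-cycle C_m, for 0 ≤ i ≤ m-4, of (number of connected components of the induced subgraph C_m[Y] minus 1) equals (i+1)·binom(m, i+2) - m·binom(m-2, i). -/
open Finset SimpleGraph

namespace Stmt13

open Fin.NatCast Fin.CommRing

variable {n : ℕ}

def cyc (n : ℕ) : SimpleGraph (Fin (n+3)) :=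
  SimpleGraph.fromRel (fun a b : Fin (n+3) => (a.val + 1) % (n+3) = b.val)

lemma ex (Y : Finset (Fin (n+3))) (a : Fin (n+3)) (ha : a ∉ Y) (v : Fin (n+3)) :
    ∃ j : ℕ, v - ((j : Fin (n+3)) + 1) ∉ Y := by
  by_cases hv : v = a
  · refine ⟨n + 2, ?_⟩
    have h0 : ((n + 2 : ℕ) : Fin (n+3)) + 1 = 0 := by
      have e : ((n + 2 : ℕ) : Fin (n+3)) + 1 = ((n + 3 : ℕ) : Fin (n+3)) := by
        push_cast; ring
      rw [e, Fin.natCast_self]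
    rw [h0, sub_zero, hv]
    exact ha
  · refine ⟨(v - a).val - 1, ?_⟩
    have hne : v - a ≠ 0 := sub_ne_zero.mpr hv
    have hval : (v - a).val ≠ 0 := by
      exact fun h => hne (Fin.ext (by rw [h]; rfl))
    have h2 : (((v - a).val - 1 : ℕ) : Fin (n+3)) + 1 = v - a := by
      have h1 : (((v - a).val - 1 : ℕ) + 1 : ℕ) = (v - a).val := by omega
      calc (((v - a).val - 1 : ℕ) : Fin (n+3)) + 1
          = ((((v - a).val - 1 : ℕ) + 1 : ℕ) : Fin (n+3)) := by push_cast; ring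
        _ = (((v - a).val : ℕ) : Fin (n+3)) := by rw [h1]
        _ = v - a := Fin.cast_val_eq_self _
    rw [h2, sub_sub_cancel]
    exact ha

noncomputable def J (Y : Finset (Fin (n+3))) (a : Fin (n+3)) (ha : a ∉ Y)
    (v : Fin (n+3)) : ℕ := Nat.find (ex Y a ha v)

noncomputable def lft (Y : Finset (Fin (n+3))) (a : Fin (n+3)) (ha : a ∉ Y)
    (v : Fin (n+3)) : Fin (n+3) := v - ((J Y a ha v : ℕ) : Fin (n+3))

lemma mem_of_le (Y : Finset (Fin (n+3))) (a : Fin (n+3)) (ha : a ∉ Y)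
    (v : Fin (n+3)) (hv : v ∈ Y) :
    ∀ j ≤ J Y a ha v, v - ((j : ℕ) : Fin (n+3)) ∈ Y := by
  intro j hj
  match j with
  | 0 => simpa using hv
  | (k+1) =>
    have hk : k < J Y a ha v := by omega
    have := Nat.find_min (ex Y a ha v) hk
    simp only [not_not] at this
    have hcast : ((k+1 : ℕ) : Fin (n+3)) = ((k : ℕ) : Fin (n+3)) + 1 := by push_cast; ring
    rwa [hcast]

lemma lft_mem (Y : Finset (Fin (n+3))) (a : Fin (n+3)) (ha : a ∉ Y)
    (v : Fin (n+3)) (hv : v ∈ Y) : lft Y a ha v ∈ Y :=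
  mem_of_le Y a ha v hv _ le_rfl

lemma lft_pred_not_mem (Y : Finset (Fin (n+3))) (a : Fin (n+3)) (ha : a ∉ Y)
    (v : Fin (n+3)) : lft Y a ha v - 1 ∉ Y := by
  have h := Nat.find_spec (ex Y a ha v)
  have e : lft Y a ha v - 1 = v - (((J Y a ha v : ℕ) : Fin (n+3)) + 1) := by
    unfold lft; ring
  rwa [e]

lemma lft_succ (Y : Finset (Fin (n+3))) (a : Fin (n+3)) (ha : a ∉ Y)
    (u : Fin (n+3)) (hu : u ∈ Y) (hu1 : u + 1 ∈ Y) :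
    lft Y a ha (u + 1) = lft Y a ha u := by
  have hJ : J Y a ha (u + 1) = J Y a ha u + 1 := by
    rw [J, Nat.find_eq_iff]
    constructor
    · have h := Nat.find_spec (ex Y a ha u)
      have e : u + 1 - (((J Y a ha u + 1 : ℕ) : Fin (n+3)) + 1)
          = u - (((J Y a ha u : ℕ) : Fin (n+3)) + 1) := by push_cast; ring
      rwa [e]
    · intro k hk
      simp only [not_not]
      match k with
      | 0 =>
        have e : u + 1 - (((0 : ℕ) : Fin (n+3)) + 1) = u := by push_cast; ring
        rwa [e]
      | (t+1) =>
        have ht : t < J Y a ha u := by omega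
        have := Nat.find_min (ex Y a ha u) ht
        simp only [not_not] at this
        have e : u + 1 - (((t + 1 : ℕ) : Fin (n+3)) + 1)
            = u - (((t : ℕ) : Fin (n+3)) + 1) := by push_cast; ring
        rwa [e]
  unfold lft
  rw [hJ]
  push_cast
  ring

lemma lft_fix (Y : Finset (Fin (n+3))) (a : Fin (n+3)) (ha : a ∉ Y)
    (k : Fin (n+3)) (hk : k - 1 ∉ Y) : lft Y a ha k = k := by
  have hJ : J Y a ha k = 0 := by
    rw [J, Nat.find_eq_zero]
    simpa using hk
  unfold lft
  rw [hJ]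
  simp

lemma adj_iff {a b : Fin (n+3)} :
    (cyc n).Adj a b ↔ a ≠ b ∧ (b = a + 1 ∨ a = b + 1) := by
  have h : ∀ x y : Fin (n+3), ((x.val + 1) % (n+3) = y.val) ↔ y = x + 1 := by
    intro x y
    rw [Fin.ext_iff, Fin.val_add, Fin.val_one]
    exact eq_comm
  simp only [cyc, SimpleGraph.fromRel_adj, h]

lemma succ_ne (a : Fin (n+3)) : a + 1 ≠ a := by
  intro h
  have h1 : (1 : Fin (n+3)) = 0 := by
    nth_rewrite 2 [← add_zero a] at h
    exact add_left_cancel h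
  exact one_ne_zero h1

lemma induce_adj' (Y : Finset (Fin (n+3))) (x y : (Y : Set (Fin (n+3))))
    (h : (cyc n).Adj x.1 y.1) : ((cyc n).induce (Y : Set (Fin (n+3)))).Adj x y := by
  simpa [SimpleGraph.comap_adj] using h

lemma reach_lft (Y : Finset (Fin (n+3))) (a : Fin (n+3)) (ha : a ∉ Y)
    (v : Fin (n+3)) (hv : v ∈ Y) :
    ∀ j, (hj : j ≤ J Y a ha v) →
      ((cyc n).induce (Y : Set (Fin (n+3)))).Reachable ⟨v, hv⟩
        ⟨v - ((j : ℕ) : Fin (n+3)), mem_of_le Y a ha v hv j hj⟩ := by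
  intro j
  induction j with
  | zero =>
    intro hj
    have e : v - ((0 : ℕ) : Fin (n+3)) = v := by push_cast; ring
    convert SimpleGraph.Reachable.refl (⟨v, hv⟩ : (Y : Set (Fin (n+3)))) using 2
  | succ k ih =>
    intro hj
    have hk : k ≤ J Y a ha v := by omega
    refine (ih hk).trans (SimpleGraph.Adj.reachable ?_)
    apply induce_adj'
    rw [adj_iff]
    have e : v - ((k : ℕ) : Fin (n+3)) = v - (((k+1 : ℕ) : Fin (n+3))) + 1 := by
      push_cast; ring
    refine ⟨?_, Or.inr e⟩
    show v - ((k : ℕ) : Fin (n+3)) ≠ v - ((k+1 : ℕ) : Fin (n+3))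
    rw [e]
    exact succ_ne _

lemma lft_reach_eq (Y : Finset (Fin (n+3))) (a : Fin (n+3)) (ha : a ∉ Y)
    {x y : (Y : Set (Fin (n+3)))}
    (h : ((cyc n).induce (Y : Set (Fin (n+3)))).Reachable x y) :
    lft Y a ha x.1 = lft Y a ha y.1 := by
  obtain ⟨p⟩ := h
  induction p with
  | nil => rfl
  | @cons u w z huw p ih =>
    have hadj : (cyc n).Adj u.1 w.1 := by
      simpa [SimpleGraph.comap_adj] using huw
    rw [adj_iff] at hadj
    have hu : u.1 ∈ Y := u.2
    have hw : w.1 ∈ Y := w.2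
    rcases hadj.2 with h1 | h1
    · rw [← ih]
      rw [h1]
      exact (lft_succ Y a ha u.1 hu (h1 ▸ hw)).symm
    · rw [← ih]
      rw [h1]
      exact lft_succ Y a ha w.1 hw (h1 ▸ hu)

lemma comp_card (Y : Finset (Fin (n+3))) (a : Fin (n+3)) (ha : a ∉ Y) :
    Nat.card ((cyc n).induce (Y : Set (Fin (n+3)))).ConnectedComponent
      = (Y.filter (fun k => k - 1 ∉ Y)).card := by
  classical
  have key : Function.Bijective (fun k : (Y.filter (fun k => k - 1 ∉ Y)) =>
      ((cyc n).induce (Y : Set (Fin (n+3)))).connectedComponentMk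
        ⟨k.1, Finset.mem_coe.mpr (mem_filter.mp k.2).1⟩) := by
    constructor
    · rintro ⟨k1, hk1⟩ ⟨k2, hk2⟩ h
      rw [SimpleGraph.ConnectedComponent.eq] at h
      have h2 := lft_reach_eq Y a ha h
      simp only at h2
      rw [mem_filter] at hk1 hk2
      rw [lft_fix Y a ha k1 hk1.2, lft_fix Y a ha k2 hk2.2] at h2
      exact Subtype.ext h2
    · intro c
      obtain ⟨⟨v, hv⟩, rfl⟩ := c.exists_rep
      have hv' : v ∈ Y := hv
      have hmem : lft Y a ha v ∈ Y.filter (fun k => k - 1 ∉ Y) := by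
        rw [mem_filter]
        exact ⟨lft_mem Y a ha v hv', lft_pred_not_mem Y a ha v⟩
      refine ⟨⟨lft Y a ha v, hmem⟩, ?_⟩
      exact SimpleGraph.ConnectedComponent.sound
        (reach_lft Y a ha v hv' (J Y a ha v) le_rfl).symm
  calc Nat.card ((cyc n).induce (Y : Set (Fin (n+3)))).ConnectedComponent
      = Nat.card (Y.filter (fun k => k - 1 ∉ Y)) := (Nat.card_eq_of_bijective _ key).symm
    _ = _ := Nat.card_eq_finsetCard _


lemma filter_L_card (Y : Finset (Fin (n+3))) :
    (Y.filter (fun k => k - 1 ∉ Y)).card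
      = Y.card - (Y.filter (fun k => k + 1 ∈ Y)).card := by
  classical
  have h1 : (Y.filter (fun k => k - 1 ∈ Y)).card = (Y.filter (fun k => k + 1 ∈ Y)).card := by
    apply Finset.card_bij' (fun k _ => k - 1) (fun k _ => k + 1)
    · intro k _; rw [sub_add_cancel]
    · intro k _; rw [add_sub_cancel_right]
    · intro k hk
      rw [mem_filter] at hk ⊢
      exact ⟨hk.2, by rw [sub_add_cancel]; exact hk.1⟩
    · intro k hk
      rw [mem_filter] at hk ⊢
      exact ⟨hk.2, by rw [add_sub_cancel_right]; exact hk.1⟩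
  have h2 := Finset.card_filter_add_card_filter_not
    (s := Y) (p := fun k => k - 1 ∈ Y)
  omega

lemma succ_ne' (k : Fin (n+3)) : k + 1 ≠ k := succ_ne k

lemma count_contain (i : ℕ) (k : Fin (n+3)) :
    (((univ : Finset (Fin (n+3))).powersetCard (i+2)).filter
        (fun Y => k ∈ Y ∧ k + 1 ∈ Y)).card = (n+1).choose i := by
  classical
  have hk : k + 1 ≠ k := succ_ne k
  have hcard : (((univ : Finset (Fin (n+3))).erase k).erase (k+1)).card = n + 1 := by
    rw [Finset.card_erase_of_mem, Finset.card_erase_of_mem]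
    · simp
    · exact Finset.mem_univ _
    · exact Finset.mem_erase.mpr ⟨hk, Finset.mem_univ _⟩
  rw [← hcard, ← Finset.card_powersetCard]
  apply Finset.card_bij' (fun Y _ => (Y.erase k).erase (k+1))
    (fun S _ => insert k (insert (k+1) S))
  · intro Y hY
    rw [mem_filter, Finset.mem_powersetCard] at hY
    obtain ⟨⟨hsub, hYc⟩, hkY, hk1Y⟩ := hY
    rw [Finset.insert_erase (Finset.mem_erase.mpr ⟨hk, hk1Y⟩), Finset.insert_erase hkY]
  · intro S hS
    rw [Finset.mem_powersetCard] at hS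
    obtain ⟨hsub, hSc⟩ := hS
    have hk1S : k + 1 ∉ S := fun h => (Finset.mem_erase.mp (hsub h)).1 rfl
    have hkS : k ∉ S := fun h =>
      (Finset.mem_erase.mp (Finset.mem_erase.mp (hsub h)).2).1 rfl
    have hkins : k ∉ insert (k+1) S := by
      rw [Finset.mem_insert]
      rintro (h | h)
      · exact hk h.symm
      · exact hkS h
    rw [Finset.erase_insert hkins, Finset.erase_insert hk1S]
  · intro Y hY
    rw [mem_filter, Finset.mem_powersetCard] at hY
    obtain ⟨⟨hsub, hYc⟩, hkY, hk1Y⟩ := hY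
    rw [Finset.mem_powersetCard]
    constructor
    · exact Finset.erase_subset_erase _ (Finset.erase_subset_erase _ hsub)
    · rw [Finset.card_erase_of_mem (Finset.mem_erase.mpr ⟨hk, hk1Y⟩),
        Finset.card_erase_of_mem hkY, hYc]
      omega
  · intro S hS
    rw [Finset.mem_powersetCard] at hS
    obtain ⟨hsub, hSc⟩ := hS
    have hk1S : k + 1 ∉ S := fun h => (Finset.mem_erase.mp (hsub h)).1 rfl
    have hkS : k ∉ S := fun h =>
      (Finset.mem_erase.mp (Finset.mem_erase.mp (hsub h)).2).1 rfl
    have hkins : k ∉ insert (k+1) S := by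
      rw [Finset.mem_insert]
      rintro (h | h)
      · exact hk h.symm
      · exact hkS h
    rw [mem_filter, Finset.mem_powersetCard]
    refine ⟨⟨Finset.subset_univ _, ?_⟩, Finset.mem_insert_self _ _,
      Finset.mem_insert_of_mem (Finset.mem_insert_self _ _)⟩
    rw [Finset.card_insert_of_notMem hkins, Finset.card_insert_of_notMem hk1S, hSc]


lemma perY (i : ℕ) (Y : Finset (Fin (n+3))) (hYc : Y.card = i + 2) (hlt : Y.card < n + 3) :
    Nat.card ((cyc n).induce (Y : Set (Fin (n+3)))).ConnectedComponent - 1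
      = (i + 1) - (Y.filter (fun k => k + 1 ∈ Y)).card
    ∧ (Y.filter (fun k => k + 1 ∈ Y)).card ≤ i + 1 := by
  classical
  have hex : ∃ a, a ∉ Y := by
    by_contra h
    push_neg at h
    have he : Y = univ := Finset.eq_univ_of_forall h
    rw [he, Finset.card_univ, Fintype.card_fin] at hlt
    omega
  obtain ⟨a, ha⟩ := hex
  have hc := comp_card Y a ha
  have hE : (Y.filter (fun k => k + 1 ∈ Y)).card ≤ Y.card := Finset.card_filter_le _ _
  have hpos : 1 ≤ Nat.card ((cyc n).induce (Y : Set (Fin (n+3)))).ConnectedComponent := by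
    have hne : Nonempty ((cyc n).induce (Y : Set (Fin (n+3)))).ConnectedComponent := by
      have hy : Y.Nonempty := by rw [← Finset.card_pos, hYc]; omega
      obtain ⟨v, hv⟩ := hy
      exact ⟨((cyc n).induce (Y : Set (Fin (n+3)))).connectedComponentMk ⟨v, hv⟩⟩
    exact Nat.one_le_iff_ne_zero.mpr (Nat.card_ne_zero.mpr ⟨hne, inferInstance⟩)
  rw [hc, filter_L_card Y] at hpos ⊢
  omega

lemma Esum (i : ℕ) :
    ∑ Y ∈ (univ : Finset (Fin (n+3))).powersetCard (i+2),
        (Y.filter (fun k => k + 1 ∈ Y)).card = (n+3) * (n+1).choose i := by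
  classical
  have h1 : ∀ Y : Finset (Fin (n+3)), (Y.filter (fun k => k + 1 ∈ Y)).card
      = ∑ k : Fin (n+3), if k ∈ Y ∧ k + 1 ∈ Y then 1 else 0 := by
    intro Y
    rw [← Finset.card_filter]
    congr 1
    ext k
    simp [and_comm]
  calc ∑ Y ∈ (univ : Finset (Fin (n+3))).powersetCard (i+2),
          (Y.filter (fun k => k + 1 ∈ Y)).card
      = ∑ Y ∈ (univ : Finset (Fin (n+3))).powersetCard (i+2),
          ∑ k : Fin (n+3), if k ∈ Y ∧ k + 1 ∈ Y then 1 else 0 := by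
        exact Finset.sum_congr rfl (fun Y _ => h1 Y)
    _ = ∑ k : Fin (n+3), ∑ Y ∈ (univ : Finset (Fin (n+3))).powersetCard (i+2),
          if k ∈ Y ∧ k + 1 ∈ Y then 1 else 0 := Finset.sum_comm
    _ = ∑ k : Fin (n+3), (n+1).choose i := by
        refine Finset.sum_congr rfl (fun k _ => ?_)
        rw [← Finset.card_filter]
        exact count_contain i k
    _ = (n+3) * (n+1).choose i := by
        rw [Finset.sum_const, Finset.card_univ, Fintype.card_fin, smul_eq_mul]

end Stmt13

/-- For `m ≥ 3` and `0 ≤ i ≤ m - 4`, the sum over all `(i+2)`-element subsets `Y`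
of the vertices of the `m`-cycle `C_m` of (number of connected components of the
induced subgraph `C_m[Y]`, minus 1) equals `(i+1)·C(m, i+2) - m·C(m-2, i)`. -/
theorem stmt_13 (m i : ℕ) (hm : 3 ≤ m) (hi : i ≤ m - 4)
    (C : SimpleGraph (Fin m))
    (hC : C = SimpleGraph.fromRel (fun a b : Fin m => (a.val + 1) % m = b.val)) :
    ∑ Y ∈ (Finset.univ : Finset (Fin m)).powersetCard (i + 2),
        (Nat.card (C.induce (Y : Set (Fin m))).ConnectedComponent - 1)
      = (i + 1) * m.choose (i + 2) - m * (m - 2).choose i := by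
  classical
  obtain ⟨n, rfl⟩ : ∃ n, m = n + 3 := ⟨m - 3, by omega⟩
  subst hC
  have hcg : (SimpleGraph.fromRel (fun a b : Fin (n+3) => (a.val + 1) % (n+3) = b.val))
      = Stmt13.cyc n := rfl
  rw [hcg]
  have hch2 : n + 3 - 2 = n + 1 := by omega
  rw [hch2]
  have hforall : ∀ Y ∈ (Finset.univ : Finset (Fin (n+3))).powersetCard (i + 2),
      Nat.card ((Stmt13.cyc n).induce (Y : Set (Fin (n+3)))).ConnectedComponent - 1
        = (i + 1) - (Y.filter (fun k => k + 1 ∈ Y)).card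
      ∧ (Y.filter (fun k => k + 1 ∈ Y)).card ≤ i + 1 := by
    intro Y hY
    rw [Finset.mem_powersetCard_univ] at hY
    exact Stmt13.perY i Y hY (by omega)
  rw [Finset.sum_congr rfl (fun Y hY => (hforall Y hY).1)]
  rw [Finset.sum_tsub_distrib _ (fun Y hY => (hforall Y hY).2)]
  rw [Stmt13.Esum i, Finset.sum_const, Finset.card_powersetCard, Finset.card_univ,
    Fintype.card_fin, smul_eq_mul, mul_comm]
end

section
/- For m ≥ 4 the sequence of Betti numbers β_i = (i+1)·binom(m, i+2) - m·binom(m-2, i) for 0 ≤ i ≤ m-4, extended by β_{-1} = 1 and β_{m-3} = 1, is symmetric: β_i = β_{m-4-i} for 0 ≤ i ≤ m-4. -/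
private lemma key (i j : ℕ) :
    ((i : ℤ) - j) * (i + j + 4).choose (i + 2)
      = (i + j + 4) * ((i + j + 2).choose i - (i + j + 2).choose (i + 2)) := by
  have h1 : (i + j + 4) * (i + j + 3).choose (i + 1) = (i + j + 4).choose (i + 2) * (i + 2) := by
    have := Nat.add_one_mul_choose_eq (i + j + 3) (i + 1)
    simpa [Nat.succ_eq_add_one, show i + j + 3 + 1 = i + j + 4 by ring] using this
  have hsymm : (i + j + 4).choose (j + 2) = (i + j + 4).choose (i + 2) := by
    have : (i + j + 4) - (i + 2) = j + 2 := by omega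
    rw [← this, Nat.choose_symm (by omega)]
  have hsymm2 : (i + j + 3).choose (j + 1) = (i + j + 3).choose (i + 2) := by
    have : (i + j + 3) - (i + 2) = j + 1 := by omega
    rw [← this, Nat.choose_symm (by omega)]
  have h2 : (i + j + 4) * (i + j + 3).choose (i + 2) = (i + j + 4).choose (i + 2) * (j + 2) := by
    have := Nat.add_one_mul_choose_eq (i + j + 3) (j + 1)
    rw [show i+j+3+1 = i + j + 4 from rfl] at this
    rw [← hsymm2, this, show j+1+1 = j + 2 from rfl]
    rw [hsymm]
  have hp1 : (i + j + 3).choose (i + 1) = (i + j + 2).choose i + (i + j + 2).choose (i + 1) :=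
    Nat.choose_succ_succ (i + j + 2) i
  have hp2 : (i + j + 3).choose (i + 2) = (i + j + 2).choose (i + 1) + (i + j + 2).choose (i + 2) :=
    Nat.choose_succ_succ (i + j + 2) (i + 1)
  have c1 : ((i : ℤ) + j + 4) * ((i + j + 2).choose i + (i + j + 2).choose (i + 1))
      = ((i + j + 4).choose (i + 2) : ℤ) * (i + 2) := by exact_mod_cast (hp1 ▸ h1)
  have c2 : ((i : ℤ) + j + 4) * ((i + j + 2).choose (i + 1) + (i + j + 2).choose (i + 2))
      = ((i + j + 4).choose (i + 2) : ℤ) * (j + 2) := by exact_mod_cast (hp2 ▸ h2)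
  nlinarith [c1, c2]

/-- For `m ≥ 4`, the Betti numbers `β_i = (i+1)·C(m, i+2) - m·C(m-2, i)` for
`0 ≤ i ≤ m - 4` (extended by `β₋₁ = β_(m-3) = 1`) are symmetric:
`β_i = β_(m-4-i)`. -/
theorem stmt_15 (m i : ℕ) (hm : 4 ≤ m) (hi : i ≤ m - 4) :
    ((i : ℤ) + 1) * m.choose (i + 2) - m * (m - 2).choose i
      = ((m - 4 - i : ℕ) + 1 : ℤ) * m.choose ((m - 4 - i) + 2)
        - m * (m - 2).choose (m - 4 - i) := by
  obtain ⟨j, hj⟩ : ∃ j, m - 4 - i = j := ⟨_, rfl⟩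
  have hm4 : m = i + j + 4 := by omega
  subst hm4
  have e1 : (i + j + 4).choose (j + 2) = (i + j + 4).choose (i + 2) := by
    have h := Nat.choose_symm (n := i + j + 4) (k := i + 2) (by omega)
    rwa [show i + j + 4 - (i + 2) = j + 2 by omega] at h
  have e2 : (i + j + 2).choose j = (i + j + 2).choose (i + 2) := by
    have h := Nat.choose_symm (n := i + j + 2) (k := i + 2) (by omega)
    rwa [show i + j + 2 - (i + 2) = j by omega] at h
  rw [hj, show i + j + 4 - 2 = i + j + 2 by omega, e1, e2]
  have := key i j
  push_cast at this ⊢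
  linarith
end
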